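/- Let $X$ be a faithful quandle such that for some $x \in X$ the right multiplication $S_x$ fixes an element $y \neq x$. Then the quandle ring $\mathbf{k}[X]$ has a non-trivial idempotent. -/

import Mathlib

/-- A quandle with the paper's (right-multiplication) convention:
`x * y = S_y(x)`, each `S_y` is an automorphism of the quandle fixing `y`. -/
class Quandle' (Q : Type*) extends Mul Q where
  invMul : Q → Q → Q
  rightDist : ∀ x y z : Q, (x * y) * z = (x * z) * (y * z)
  invMul_mul : ∀ x y : Q, invMul (x * y) y = x
  mul_invMul : ∀ x y : Q, (invMul x y) * y = x
  mul_self : ∀ x : Q, x * x = x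

/-- A faithful quandle in which some `S_x` has a fixed point other than `x` has a
non-trivial idempotent in its quandle ring. -/
theorem stmt5 {Q : Type*} [Quandle' Q] (k : Type*) [CommRing k] [IsDomain k]
    (hk : ∃ a : k, a ≠ 0 ∧ a ≠ 1)
    (faithful : ∀ a b : Q, (∀ z : Q, z * a = z * b) → a = b)
    (x y : Q) (hxy : y ≠ x) (hfix : y * x = y) :
    ∃ u : MonoidAlgebra k Q, u * u = u ∧ u ≠ 0 ∧ ∀ z : Q, u ≠ MonoidAlgebra.single z (1 : k) := by
  classical
  obtain ⟨a, ha0, ha1⟩ := hk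
  -- Step 1: S_x and S_y commute
  have comm : ∀ z : Q, (z * y) * x = (z * x) * y := by
    intro z
    have := Quandle'.rightDist z y x
    rwa [hfix] at this
  -- Step 2: x * y = x
  have hxyx : x * y = x := by
    apply faithful
    intro z
    have h1 := Quandle'.rightDist (Quandle'.invMul z y) x y
    rw [Quandle'.mul_invMul] at h1
    have h2 := comm (Quandle'.invMul z y)
    rw [Quandle'.mul_invMul] at h2
    rw [← h1, h2]
  refine ⟨MonoidAlgebra.single x a + MonoidAlgebra.single y (1 - a), ?_, ?_, ?_⟩
  · rw [add_mul, mul_add, mul_add, MonoidAlgebra.single_mul_single,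
      MonoidAlgebra.single_mul_single, MonoidAlgebra.single_mul_single,
      MonoidAlgebra.single_mul_single, Quandle'.mul_self, Quandle'.mul_self, hxyx, hfix]
    rw [add_assoc, ← MonoidAlgebra.single_add, ← add_assoc, ← MonoidAlgebra.single_add]
    have h1 : a * a + a * (1 - a) = a := by ring
    have h2 : (1 - a) * a + (1 - a) * (1 - a) = 1 - a := by ring
    rw [h1, h2]
  · intro h
    have h' : (Finsupp.single x a + Finsupp.single y (1 - a) : Q →₀ k) = 0 := congrArg MonoidAlgebra.coeff h
    have hc := DFunLike.congr_fun h' x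
    rw [Finsupp.add_apply, Finsupp.single_apply, Finsupp.single_apply, if_pos rfl,
      if_neg hxy, add_zero, Finsupp.zero_apply] at hc
    exact ha0 hc
  · intro z h
    have h' : (Finsupp.single x a + Finsupp.single y (1 - a) : Q →₀ k) = Finsupp.single z 1 := congrArg MonoidAlgebra.coeff h
    have hc := DFunLike.congr_fun h' y
    have hne : x ≠ y := fun hh => hxy hh.symm
    rw [Finsupp.add_apply, Finsupp.single_apply, Finsupp.single_apply, Finsupp.single_apply,
      if_neg hne, if_pos rfl, zero_add] at hc
    by_cases hz : z = y
    · rw [if_pos hz] at hc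
      exact ha0 (sub_eq_self.mp hc)
    · rw [if_neg hz] at hc
      exact ha1 (sub_eq_zero.mp hc).symm
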